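/- arXiv:2406.14147 — 4 statements merged into one kernel-verified Lean document; each statement's English description precedes it below -/
import Mathlib

section
/- Let A1, B1, A2, B2 be four points in R^3 with |A1B1| = |A2B2| and |B1A2| = |B2A1|. Let N_A be the midpoint of segment A1A2 and N_B the midpoint of segment B1B2, and suppose N_A ≠ N_B. Then the line through N_A and N_B is perpendicular to the line through A1 and A2. -/
theorem stmt_0 (A1 B1 A2 B2 : EuclideanSpace ℝ (Fin 3))
    (h1 : dist A1 B1 = dist A2 B2) (h2 : dist B1 A2 = dist B2 A1)
    (NA NB : EuclideanSpace ℝ (Fin 3))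
    (hNA : NA = midpoint ℝ A1 A2) (hNB : NB = midpoint ℝ B1 B2)
    (hne : NA ≠ NB) :
    inner ℝ (NB - NA) (A2 - A1) = (0 : ℝ) := by
  simp only [dist_eq_norm] at h1 h2
  have h1' : ‖A1 - B1‖ ^ 2 = ‖A2 - B2‖ ^ 2 := by rw [h1]
  have h2' : ‖B1 - A2‖ ^ 2 = ‖B2 - A1‖ ^ 2 := by rw [h2]
  rw [@norm_sub_sq_real, @norm_sub_sq_real] at h1' h2'
  subst hNA hNB
  have key : midpoint ℝ B1 B2 - midpoint ℝ A1 A2 = (2:ℝ)⁻¹ • (B1 + B2 - (A1 + A2)) := by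
    rw [midpoint_eq_smul_add, midpoint_eq_smul_add, ← smul_sub]; norm_num
  rw [key, real_inner_smul_left]
  simp only [inner_sub_left, inner_add_left, inner_sub_right]
  have hs : ∀ x y : EuclideanSpace ℝ (Fin 3), inner ℝ x y = inner ℝ y x :=
    fun x y => (real_inner_comm y x)
  have e1 := real_inner_self_eq_norm_sq A1
  have e2 := real_inner_self_eq_norm_sq A2
  nlinarith [h1', h2', e1, e2, hs A1 B1, hs A2 B2, hs A1 A2, hs A2 B1, hs A1 B2]
end

section
/- Let A1, B1, A2, B2 be four points in R^3 with |A1B1| = |A2B2| and |B1A2| = |B2A1|. Let N_A be the midpoint of A1A2 and N_B the midpoint of B1B2, with N_A ≠ N_B. Then the rotation of R^3 by 180 degrees about the line through N_A and N_B maps A1 to A2, A2 to A1, B1 to B2, and B2 to B1. -/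
/-- Rotation of `ℝ³` by 180° about the line through `a` with direction `d`:
it fixes the line pointwise and acts as a point reflection (through the
intersection point with the line) on each plane perpendicular to the line.
Equivalently, `x ↦ 2 • (orthogonal projection of x onto the line) - x`. -/
noncomputable def rot180 (a d : EuclideanSpace ℝ (Fin 3)) (x : EuclideanSpace ℝ (Fin 3)) :
    EuclideanSpace ℝ (Fin 3) :=
  (2 : ℝ) • (a + ((inner ℝ (x - a) d / inner ℝ d d : ℝ) • d)) - x

theorem stmt_1 (A1 B1 A2 B2 : EuclideanSpace ℝ (Fin 3))
    (h1 : dist A1 B1 = dist A2 B2) (h2 : dist B1 A2 = dist B2 A1)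
    (NA NB : EuclideanSpace ℝ (Fin 3))
    (hNA : NA = midpoint ℝ A1 A2) (hNB : NB = midpoint ℝ B1 B2)
    (hne : NA ≠ NB) :
    rot180 NA (NB - NA) A1 = A2 ∧ rot180 NA (NB - NA) A2 = A1 ∧
      rot180 NA (NB - NA) B1 = B2 ∧ rot180 NA (NB - NA) B2 = B1 := by
  set d : EuclideanSpace ℝ (Fin 3) := NB - NA with hd
  have hdne : d ≠ 0 := sub_ne_zero.mpr (Ne.symm hne)
  have hdd : (inner ℝ d d : ℝ) ≠ 0 := by
    exact inner_self_ne_zero.mpr hdne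
  have h1' : ‖A1 - B1‖ ^ 2 = ‖A2 - B2‖ ^ 2 := by
    rw [← dist_eq_norm, ← dist_eq_norm, h1]
  have h2' : ‖B1 - A2‖ ^ 2 = ‖B2 - A1‖ ^ 2 := by
    rw [← dist_eq_norm, ← dist_eq_norm, h2]
  rw [@norm_sub_sq_real, @norm_sub_sq_real] at h1' h2'
  -- orthogonality of A1 - A2 to the axis direction
  have hNAeq : NA = (2⁻¹ : ℝ) • (A1 + A2) := by
    rw [hNA, midpoint_eq_smul_add, invOf_eq_inv]
  have hNBeq : NB = (2⁻¹ : ℝ) • (B1 + B2) := by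
    rw [hNB, midpoint_eq_smul_add, invOf_eq_inv]
  have e1 : (inner ℝ (A1 - A2) ((B1 + B2) - (A1 + A2)) : ℝ) = 0 := by
    simp only [inner_sub_left, inner_sub_right, inner_add_left, inner_add_right,
      real_inner_self_eq_norm_sq] at *
    nlinarith [real_inner_comm A1 B1, real_inner_comm A2 B2, real_inner_comm B1 A2,
      real_inner_comm B2 A1, real_inner_comm A1 A2, real_inner_comm B1 B2]
  have e2 : (inner ℝ (B1 - B2) ((B1 + B2) - (A1 + A2)) : ℝ) = 0 := by
    simp only [inner_sub_left, inner_sub_right, inner_add_left, inner_add_right,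
      real_inner_self_eq_norm_sq] at *
    nlinarith [real_inner_comm A1 B1, real_inner_comm A2 B2, real_inner_comm B1 A2,
      real_inner_comm B2 A1, real_inner_comm A1 A2, real_inner_comm B1 B2]
  have hdval : d = (2⁻¹ : ℝ) • ((B1 + B2) - (A1 + A2)) := by
    rw [hd, hNAeq, hNBeq]; module
  -- inner products of the four differences with d
  have iA1 : (inner ℝ (A1 - NA) d : ℝ) = 0 := by
    have : A1 - NA = (2⁻¹ : ℝ) • (A1 - A2) := by rw [hNAeq]; module
    rw [this, hdval, real_inner_smul_left, real_inner_smul_right, e1]; ring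
  have iA2 : (inner ℝ (A2 - NA) d : ℝ) = 0 := by
    have : A2 - NA = -((2⁻¹ : ℝ) • (A1 - A2)) := by rw [hNAeq]; module
    rw [this, hdval, inner_neg_left, real_inner_smul_left, real_inner_smul_right, e1]; ring
  have iB1 : (inner ℝ (B1 - NA) d : ℝ) = inner ℝ d d := by
    have : B1 - NA = (2⁻¹ : ℝ) • (B1 - B2) + d := by rw [hNAeq, hdval]; module
    rw [this, inner_add_left, real_inner_smul_left, hdval, real_inner_smul_right, e2]
    rw [← hdval]; ring
  have iB2 : (inner ℝ (B2 - NA) d : ℝ) = inner ℝ d d := by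
    have : B2 - NA = -((2⁻¹ : ℝ) • (B1 - B2)) + d := by rw [hNAeq, hdval]; module
    rw [this, inner_add_left, inner_neg_left, real_inner_smul_left, hdval,
      real_inner_smul_right, e2]
    rw [← hdval]; ring
  refine ⟨?_, ?_, ?_, ?_⟩
  · rw [rot180, iA1, zero_div, zero_smul, add_zero, hNAeq]; module
  · rw [rot180, iA2, zero_div, zero_smul, add_zero, hNAeq]; module
  · rw [rot180, iB1, div_self hdd, one_smul, hd, hNAeq, hNBeq]; module
  · rw [rot180, iB2, div_self hdd, one_smul, hd, hNAeq, hNBeq]; module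
end

section
/- Let y1, y2, y3, z1, z2 ∈ R^3 and define V(a,b,c,d) = det(b−a, c−a, d−a). Suppose V(y1,y2,y3,z1) and V(y1,y2,y3,z2) are nonzero with opposite signs, and suppose the three numbers V(z1,z2,y1,y2), V(z1,z2,y2,y3), V(z1,z2,y3,y1) are all nonzero and all have the same sign. Then the closed segment [z1,z2] intersects the closed triangle with vertices y1, y2, y3. -/
set_option maxHeartbeats 1000000

/-- Six times the oriented volume of the tetrahedron `a b c d` in `ℝ³`. -/
noncomputable def orientedVol6 (a b c d : Fin 3 → ℝ) : ℝ :=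
  Matrix.det (Matrix.of ![b - a, c - a, d - a])

lemma orientedVol6_expand (a b c d : Fin 3 → ℝ) :
    orientedVol6 a b c d =
      (b 0 - a 0) * ((c 1 - a 1) * (d 2 - a 2) - (c 2 - a 2) * (d 1 - a 1)) -
      (b 1 - a 1) * ((c 0 - a 0) * (d 2 - a 2) - (c 2 - a 2) * (d 0 - a 0)) +
      (b 2 - a 2) * ((c 0 - a 0) * (d 1 - a 1) - (c 1 - a 1) * (d 0 - a 0)) := by
  simp [orientedVol6, Matrix.det_fin_three, Pi.sub_apply]
  ring

theorem stmt_4 (y1 y2 y3 z1 z2 : Fin 3 → ℝ)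
    (hopp : orientedVol6 y1 y2 y3 z1 * orientedVol6 y1 y2 y3 z2 < 0)
    (hsame : orientedVol6 z1 z2 y1 y2 * orientedVol6 z1 z2 y2 y3 > 0 ∧
      orientedVol6 z1 z2 y2 y3 * orientedVol6 z1 z2 y3 y1 > 0) :
    (segment ℝ z1 z2 ∩ convexHull ℝ {y1, y2, y3}).Nonempty := by
  obtain ⟨h12, h23⟩ := hsame
  set d1 := orientedVol6 y1 y2 y3 z1 with hd1
  set d2 := orientedVol6 y1 y2 y3 z2 with hd2
  set V12 := orientedVol6 z1 z2 y1 y2 with hV12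
  set V23 := orientedVol6 z1 z2 y2 y3 with hV23
  set V31 := orientedVol6 z1 z2 y3 y1 with hV31
  set S := d2 - d1 with hS
  -- key scalar identity
  have hsum : V12 + V23 + V31 = S := by
    rw [hV12, hV23, hV31, hS, hd1, hd2]
    simp only [orientedVol6_expand]
    ring
  have hV12V31 : V12 * V31 > 0 := by
    nlinarith [mul_pos h12 h23, sq_nonneg V23, mul_self_nonneg V23]
  have hSV12 : S * V12 > 0 := by
    have h : S * V12 = V12 * V12 + V12 * V23 + V12 * V31 := by
      rw [← hsum]; ring
    rw [h]; nlinarith [mul_self_nonneg V12]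
  have hSV23 : S * V23 > 0 := by
    have h : S * V23 = V23 * V23 + V12 * V23 + V23 * V31 := by
      rw [← hsum]; ring
    rw [h]; nlinarith [mul_self_nonneg V23]
  have hSV31 : S * V31 > 0 := by
    have h : S * V31 = V31 * V31 + V12 * V31 + V23 * V31 := by
      rw [← hsum]; ring
    rw [h]; nlinarith [mul_self_nonneg V31]
  have hSne : S ≠ 0 := by intro h; rw [h] at hSV12; simp at hSV12
  have hSd2 : S * d2 > 0 := by
    have h : S * d2 = d2 * d2 - d1 * d2 := by rw [hS]; ring
    rw [h]; nlinarith [mul_self_nonneg d2]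
  have hSd1 : S * (-d1) > 0 := by
    have h : S * (-d1) = d1 * d1 - d1 * d2 := by rw [hS]; ring
    rw [h]; nlinarith [mul_self_nonneg d1]
  -- weights
  set u := d2 / S with hu
  set v := -d1 / S with hv
  set a := V23 / S with ha
  set b := V31 / S with hb
  set c := V12 / S with hc
  have hpos : ∀ x : ℝ, S * x > 0 → 0 ≤ x / S := by
    intro x hx
    rw [div_nonneg_iff]
    rcases mul_pos_iff.mp hx with ⟨h1, h2⟩ | ⟨h1, h2⟩
    · exact Or.inl ⟨le_of_lt h2, le_of_lt h1⟩
    · exact Or.inr ⟨le_of_lt h2, le_of_lt h1⟩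
  have hu0 : 0 ≤ u := hpos _ hSd2
  have hv0 : 0 ≤ v := hpos _ hSd1
  have ha0 : 0 ≤ a := hpos _ hSV23
  have hb0 : 0 ≤ b := hpos _ hSV31
  have hc0 : 0 ≤ c := hpos _ hSV12
  have huv : u + v = 1 := by
    rw [hu, hv, ← add_div, hS]
    rw [div_eq_one_iff_eq (by rw [← hS]; exact hSne)]
    ring
  have habc : a + b + c = 1 := by
    rw [ha, hb, hc, ← add_div, ← add_div]
    rw [div_eq_one_iff_eq hSne]
    linarith [hsum]
  -- the intersection point
  refine ⟨u • z1 + v • z2, ?_, ?_⟩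
  · exact ⟨u, v, hu0, hv0, huv, rfl⟩
  · -- componentwise identity
    have hcomp : ∀ i : Fin 3, d2 * z1 i - d1 * z2 i = V23 * y1 i + V31 * y2 i + V12 * y3 i := by
      intro i
      fin_cases i <;>
      · rw [hV12, hV23, hV31, hd1, hd2]
        simp only [orientedVol6_expand, Fin.zero_eta, Fin.mk_one, Fin.reduceFinMk, Fin.isValue]
        ring
    have hpt : u • z1 + v • z2 = a • y1 + b • y2 + c • y3 := by
      funext i
      simp only [Pi.add_apply, Pi.smul_apply, smul_eq_mul, hu, hv, ha, hb, hc]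
      rw [div_mul_eq_mul_div, div_mul_eq_mul_div, div_mul_eq_mul_div, div_mul_eq_mul_div,
        div_mul_eq_mul_div, ← add_div, ← add_div, ← add_div,
        div_eq_div_iff hSne hSne]
      have h' : d2 * z1 i + -d1 * z2 i = V23 * y1 i + V31 * y2 i + V12 * y3 i := by
        linarith [hcomp i]
      rw [h']
    rw [hpt]
    have hmem : ∀ i : Fin 3, (![y1, y2, y3] : Fin 3 → Fin 3 → ℝ) i ∈
        ({y1, y2, y3} : Set (Fin 3 → ℝ)) := by
      intro i; fin_cases i <;> simp
    have hw0 : ∀ i ∈ (Finset.univ : Finset (Fin 3)), 0 ≤ (![a, b, c] : Fin 3 → ℝ) i := by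
      intro i _; fin_cases i <;> simpa
    have hw1 : ∑ i : Fin 3, (![a, b, c] : Fin 3 → ℝ) i = 1 := by
      simp [Fin.sum_univ_three]; linarith
    have hmem2 := Finset.centerMass_mem_convexHull (Finset.univ : Finset (Fin 3))
      hw0 (by rw [hw1]; norm_num) (fun i _ => hmem i)
    rwa [Finset.centerMass_eq_of_sum_1 _ _ hw1, Fin.sum_univ_three] at hmem2
end

section
/- Let y1, y2, y3, z1, z2 ∈ R^3 and define V(a,b,c,d) = det(b−a, c−a, d−a). Suppose V(y1,y2,y3,z1) and V(y1,y2,y3,z2) are nonzero with opposite signs, and the numbers V(z1,z2,y1,y2), V(z1,z2,y2,y3), V(z1,z2,y3,y1) are all nonzero but do not all have the same sign. Then the closed segment [z1,z2] does not intersect the closed triangle with vertices y1, y2, y3. -/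
/-- Explicit 3×3 determinant of three column vectors given by nine reals. -/
noncomputable def det3 (u0 u1 u2 x0 x1 x2 w0 w1 w2 : ℝ) : ℝ :=
  u0*(x1*w2 - x2*w1) - x0*(u1*w2 - u2*w1) + w0*(u1*x2 - u2*x1)

lemma vol_eq (a b c d : Fin 3 → ℝ) :
    orientedVol6 a b c d = det3 (b 0 - a 0) (b 1 - a 1) (b 2 - a 2)
      (c 0 - a 0) (c 1 - a 1) (c 2 - a 2) (d 0 - a 0) (d 1 - a 1) (d 2 - a 2) := by
  simp [orientedVol6, Matrix.det_fin_three, det3]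
  ring

set_option maxHeartbeats 1000000 in
lemma key (v0 v1 v2 s0 s1 s2 t a10 a11 a12 a20 a21 a22 a30 a31 a32 al be ga W1 W2 W3 : ℝ)
    (hs0 : s0 = t*v0) (hs1 : s1 = t*v1) (hs2 : s2 = t*v2)
    (hc0 : al*a10 + be*a20 + ga*a30 = 0)
    (hc1 : al*a11 + be*a21 + ga*a31 = 0)
    (hc2 : al*a12 + be*a22 + ga*a32 = 0)
    (hal : 0 ≤ al) (hbe : 0 ≤ be) (hga : 0 ≤ ga) (hsum : al + be + ga = 1)
    (hW1e : W1 = det3 v0 v1 v2 (a10+s0) (a11+s1) (a12+s2) (a20+s0) (a21+s1) (a22+s2))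
    (hW2e : W2 = det3 v0 v1 v2 (a20+s0) (a21+s1) (a22+s2) (a30+s0) (a31+s1) (a32+s2))
    (hW3e : W3 = det3 v0 v1 v2 (a30+s0) (a31+s1) (a32+s2) (a10+s0) (a11+s1) (a12+s2))
    (h1 : W1 ≠ 0) (h2 : W2 ≠ 0) (h3 : W3 ≠ 0)
    (hpos : ¬ (0 < W1 ∧ 0 < W2 ∧ 0 < W3))
    (hneg : ¬ (W1 < 0 ∧ W2 < 0 ∧ W3 < 0)) : False := by
  subst hs0 hs1 hs2
  have e1 : W1 = det3 v0 v1 v2 a10 a11 a12 a20 a21 a22 := by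
    rw [hW1e]; simp only [det3]; ring
  have e2 : W2 = det3 v0 v1 v2 a20 a21 a22 a30 a31 a32 := by
    rw [hW2e]; simp only [det3]; ring
  have e3 : W3 = det3 v0 v1 v2 a30 a31 a32 a10 a11 a12 := by
    rw [hW3e]; simp only [det3]; ring
  have i1 : ga*(ga*W1 + al*W2 + be*W3) = (al^2 + be^2 + ga^2)*W1 := by
    rw [e1, e2, e3]; simp only [det3]
    linear_combination (al*(v1*a22 - v2*a21) + be*(-(v1*a12 - v2*a11)))*hc0 +
      (al*(-(v0*a22) + a20*v2) + be*(v0*a12 - a10*v2))*hc1 +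
      (al*(v0*a21 - a20*v1) + be*(-(v0*a11) + a10*v1))*hc2
  have i2 : al*(ga*W1 + al*W2 + be*W3) = (al^2 + be^2 + ga^2)*W2 := by
    rw [e1, e2, e3]; simp only [det3]
    linear_combination (be*(v1*a32 - v2*a31) + ga*(-(v1*a22 - v2*a21)))*hc0 +
      (be*(-(v0*a32) + a30*v2) + ga*(v0*a22 - a20*v2))*hc1 +
      (be*(v0*a31 - a30*v1) + ga*(-(v0*a21) + a20*v1))*hc2
  have i3 : be*(ga*W1 + al*W2 + be*W3) = (al^2 + be^2 + ga^2)*W3 := by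
    rw [e1, e2, e3]; simp only [det3]
    linear_combination (ga*(v1*a12 - v2*a11) + al*(-(v1*a32 - v2*a31)))*hc0 +
      (ga*(-(v0*a12) + a10*v2) + al*(v0*a32 - a30*v2))*hc1 +
      (ga*(v0*a11 - a10*v1) + al*(-(v0*a31) + a30*v1))*hc2
  clear hW1e hW2e hW3e e1 e2 e3 hc0 hc1 hc2
  have hQ : 0 < al^2 + be^2 + ga^2 := by
    nlinarith [sq_nonneg (al-be), sq_nonneg (be-ga), sq_nonneg (al-ga)]
  rcases lt_trichotomy (ga*W1 + al*W2 + be*W3) 0 with hS | hS | hS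
  · refine hneg ⟨?_, ?_, ?_⟩
    · rcases h1.lt_or_gt with h | h
      · exact h
      · exfalso; nlinarith
    · rcases h2.lt_or_gt with h | h
      · exact h
      · exfalso; nlinarith
    · rcases h3.lt_or_gt with h | h
      · exact h
      · exfalso; nlinarith
  · have : (al^2 + be^2 + ga^2)*W1 = 0 := by rw [← i1, hS, mul_zero]
    exact h1 ((mul_eq_zero.1 this).resolve_left (ne_of_gt hQ))
  · refine hpos ⟨?_, ?_, ?_⟩
    · rcases h1.lt_or_gt with h | h
      · exfalso; nlinarith
      · exact h
    · rcases h2.lt_or_gt with h | h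
      · exfalso; nlinarith
      · exact h
    · rcases h3.lt_or_gt with h | h
      · exfalso; nlinarith
      · exact h

theorem stmt_5 (y1 y2 y3 z1 z2 : Fin 3 → ℝ)
    (hopp : orientedVol6 y1 y2 y3 z1 * orientedVol6 y1 y2 y3 z2 < 0)
    (hne : orientedVol6 z1 z2 y1 y2 ≠ 0 ∧ orientedVol6 z1 z2 y2 y3 ≠ 0 ∧
      orientedVol6 z1 z2 y3 y1 ≠ 0)
    (hnotsame : ¬ (0 < orientedVol6 z1 z2 y1 y2 ∧ 0 < orientedVol6 z1 z2 y2 y3 ∧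
        0 < orientedVol6 z1 z2 y3 y1) ∧
      ¬ (orientedVol6 z1 z2 y1 y2 < 0 ∧ orientedVol6 z1 z2 y2 y3 < 0 ∧
        orientedVol6 z1 z2 y3 y1 < 0)) :
    segment ℝ z1 z2 ∩ convexHull ℝ {y1, y2, y3} = ∅ := by
  rw [Set.eq_empty_iff_forall_notMem]
  rintro p ⟨hseg, hhull⟩
  obtain ⟨a, b, ha, hb, hab, hpz⟩ := hseg
  rw [show ({y1, y2, y3} : Set (Fin 3 → ℝ)) = insert y1 {y2, y3} from rfl,
    convexHull_insert ⟨y2, Set.mem_insert _ _⟩] at hhull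
  rw [mem_convexJoin] at hhull
  obtain ⟨x, hx, q, hq, hpq⟩ := hhull
  rw [Set.mem_singleton_iff] at hx
  rw [hx] at hpq
  rw [convexHull_pair] at hq
  obtain ⟨c, d, hc, hd, hcd, hqz⟩ := hq
  obtain ⟨e, f, he, hf, hef, hpe⟩ := hpq
  have hpz' : ∀ k, a * z1 k + b * z2 k = p k := fun k => by
    have := congrFun hpz k; simpa using this
  have hqz' : ∀ k, c * y2 k + d * y3 k = q k := fun k => by
    have := congrFun hqz k; simpa using this
  have hpe' : ∀ k, e * y1 k + f * q k = p k := fun k => by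
    have := congrFun hpe k; simpa using this
  refine key (z2 0 - z1 0) (z2 1 - z1 1) (z2 2 - z1 2)
    (p 0 - z1 0) (p 1 - z1 1) (p 2 - z1 2) b
    (y1 0 - p 0) (y1 1 - p 1) (y1 2 - p 2)
    (y2 0 - p 0) (y2 1 - p 1) (y2 2 - p 2)
    (y3 0 - p 0) (y3 1 - p 1) (y3 2 - p 2)
    e (f*c) (f*d)
    (orientedVol6 z1 z2 y1 y2) (orientedVol6 z1 z2 y2 y3) (orientedVol6 z1 z2 y3 y1)
    ?_ ?_ ?_ ?_ ?_ ?_ he (mul_nonneg hf hc) (mul_nonneg hf hd) ?_ ?_ ?_ ?_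
    hne.1 hne.2.1 hne.2.2 hnotsame.1 hnotsame.2
  · linear_combination (-1) * hpz' 0 + z1 0 * hab
  · linear_combination (-1) * hpz' 1 + z1 1 * hab
  · linear_combination (-1) * hpz' 2 + z1 2 * hab
  · linear_combination hpe' 0 + f * hqz' 0 - p 0 * f * hcd - p 0 * hef
  · linear_combination hpe' 1 + f * hqz' 1 - p 1 * f * hcd - p 1 * hef
  · linear_combination hpe' 2 + f * hqz' 2 - p 2 * f * hcd - p 2 * hef
  · linear_combination hef + f * hcd
  · rw [vol_eq]; simp only [det3]; ring
  · rw [vol_eq]; simp only [det3]; ring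
  · rw [vol_eq]; simp only [det3]; ring
end
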